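/- arXiv:2103.08015 — 2 statements merged into one kernel-verified Lean document; each statement's English description precedes it below -/
import Mathlib

section
/- For every integer n ≥ 1 and every real x, F_{2n}(x) + F_{2n-2}(x) = x·U_{2n-2}(x) − (3x²−4)·Σ_{k=1}^{n-1} F_{2k}(x)·U_{2(n-k-1)}(x). -/
/-- Chebyshev polynomials of the first kind. -/
def T : ℕ → ℝ → ℝ
  | 0, _ => 1
  | 1, x => x
  | (n+2), x => 2*x*T (n+1) x - T n x

/-- Chebyshev polynomials of the second kind. -/
def U : ℕ → ℝ → ℝ
  | 0, _ => 1
  | 1, x => 2*x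
  | (n+2), x => 2*x*U (n+1) x - U n x

/-- Fibonacci polynomials. -/
def F : ℕ → ℝ → ℝ
  | 0, _ => 0
  | 1, _ => 1
  | (n+2), x => x*F (n+1) x + F n x

/-- Balancing polynomials. -/
def B : ℕ → ℝ → ℝ
  | 0, _ => 0
  | 1, _ => 1
  | (n+2), x => 6*x*B (n+1) x - B n x

/-- Lucas-balancing polynomials. -/
def C : ℕ → ℝ → ℝ
  | 0, _ => 1
  | 1, x => 3*x
  | (n+2), x => 6*x*C (n+1) x - C n x

/-- Lucas numbers. -/
def lucas : ℕ → ℤ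
  | 0 => 2
  | 1 => 1
  | (n+2) => lucas (n+1) + lucas n

noncomputable def S (m : ℕ) (x : ℝ) : ℝ := ∑ j ∈ Finset.range m, F (2*(m-j)) x * U (2*j) x

lemma U_add4 (a : ℕ) (x : ℝ) : U (a+4) x = (4*x^2-2)*U (a+2) x - U a x := by
  show U (a+2+2) x = _
  rw [U, U, U]; ring

lemma F_add4 (a : ℕ) (x : ℝ) : F (a+4) x = (x^2+2)*F (a+2) x - F a x := by
  show F (a+2+2) x = _
  rw [F, F, F]; ring

lemma F_two (x : ℝ) : F 2 x = x := by rw [show (2:ℕ) = 0+2 from rfl, F]; simp [F]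

lemma Srec (m : ℕ) (x : ℝ) :
    S (m+2) x = (x^2+2) * S (m+1) x - S m x + x * U (2*m+2) x := by
  have h1 : ∀ j ∈ Finset.range m, F (2*(m+2-j)) x * U (2*j) x =
      (x^2+2) * (F (2*(m+1-j)) x * U (2*j) x) - F (2*(m-j)) x * U (2*j) x := by
    intro j hj
    simp only [Finset.mem_range] at hj
    have e1 : 2*(m+2-j) = 2*(m-j)+4 := by omega
    have e2 : 2*(m+1-j) = 2*(m-j)+2 := by omega
    rw [e1, e2, F_add4]; ring
  have h4 : F 4 x = x^3+2*x := by simp [F]; ring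
  have hC : ∑ j ∈ Finset.range m, F (2*(m+2-j)) x * U (2*j) x
      = (x^2+2) * (∑ j ∈ Finset.range m, F (2*(m+1-j)) x * U (2*j) x)
        - ∑ j ∈ Finset.range m, F (2*(m-j)) x * U (2*j) x := by
    rw [Finset.mul_sum, ← Finset.sum_sub_distrib]
    exact Finset.sum_congr rfl h1
  have hA : S (m+2) x = (∑ j ∈ Finset.range m, F (2*(m+2-j)) x * U (2*j) x)
      + (x^3+2*x) * U (2*m) x + x * U (2*m+2) x := by
    unfold S
    rw [Finset.sum_range_succ, Finset.sum_range_succ]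
    rw [show 2*(m+2-(m+1)) = 2 from by omega, show 2*(m+2-m) = 4 from by omega,
      show 2*(m+1) = 2*m+2 from by ring, h4, F_two]
  have hB : S (m+1) x = (∑ j ∈ Finset.range m, F (2*(m+1-j)) x * U (2*j) x)
      + x * U (2*m) x := by
    unfold S
    rw [Finset.sum_range_succ, show 2*(m+1-m) = 2 from by omega, F_two]
  rw [hA, hC, hB]
  unfold S
  ring

lemma main (m : ℕ) (x : ℝ) :
    F (2*m+2) x + F (2*m) x = x * U (2*m) x - (3*x^2-4) * S m x := by
  induction m using Nat.twoStepInduction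
  · simp [S, F_two, U, F]
  · simp only [S, Finset.sum_range_one]
    simp [F, U]
    ring
  · rename_i m hm hm1
    have hm1' : F (2*m+4) x + F (2*m+2) x = x * U (2*m+2) x - (3*x^2-4) * S (m+1) x := by
      have e : 2*(m+1) = 2*m+2 := by ring
      rw [e] at hm1
      exact hm1
    have hF1 := F_add4 (2*m) x
    have hF2 := F_add4 (2*m+2) x
    have hU := U_add4 (2*m) x
    have hS := Srec m x
    have e : 2*(m+2) = 2*m+4 := by ring
    rw [e]
    have e2 : 2*m+4+2 = 2*m+2+4 := by omega
    rw [e2]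
    linear_combination (-1)*hm + (x^2+2)*hm1' + hF1 + hF2 + (-x)*hU + (3*x^2-4)*hS

theorem stmt5 (n : ℕ) (hn : 1 ≤ n) (x : ℝ) :
    F (2*n) x + F (2*n-2) x =
      x * U (2*n-2) x - (3*x^2 - 4) * ∑ k ∈ Finset.Icc 1 (n-1), F (2*k) x * U (2*(n-k-1)) x := by
  obtain ⟨m, rfl⟩ := Nat.exists_eq_add_of_le hn
  have e1 : 2*(1+m) = 2*m+2 := by ring
  have e2 : 2*(1+m)-2 = 2*m := by omega
  have e3 : 1+m-1 = m := by omega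
  rw [e2, e3, e1]
  have hsum : ∑ k ∈ Finset.Icc 1 m, F (2*k) x * U (2*(1+m-k-1)) x = S m x := by
    have h1 : ∑ k ∈ Finset.Icc 1 m, F (2*k) x * U (2*(1+m-k-1)) x
        = ∑ j ∈ Finset.range m, F (2*(1+j)) x * U (2*(m-1-j)) x := by
      rw [← Finset.Ico_add_one_right_eq_Icc, Finset.sum_Ico_eq_sum_range]
      apply Finset.sum_congr (by congr 1)
      intro j hj
      simp only [Finset.mem_range] at hj
      congr 2
      omega
    rw [h1]
    unfold S
    rw [← Finset.sum_range_reflect]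
    apply Finset.sum_congr rfl
    intro j hj
    simp only [Finset.mem_range] at hj
    congr 2 <;> omega
  rw [hsum]
  exact main m x
end

section
/- For every integer n ≥ 1 and every real x, F_{2n+1}(x) − x·F_{2n-1}(x) = T_n(x) − T_{n-1}(x) + (x²−2x+2)·Σ_{k=0}^{n-1} T_{n-1-k}(x)·F_{2k+1}(x). -/
noncomputable def Sc (x : ℝ) (m : ℕ) : ℝ :=
  ∑ k ∈ Finset.range (m+1), T (m-k) x * F (2*k+1) x

lemma T_rec (j : ℕ) (x : ℝ) : T (j+2) x = 2*x*T (j+1) x - T j x := rfl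

lemma F_rec (j : ℕ) (x : ℝ) : F (j+2) x = x*F (j+1) x + F j x := rfl

lemma F_even (j : ℕ) (x : ℝ) : F (j+4) x = (x^2+2)*F (j+2) x - F j x := by
  have h0 := F_rec j x
  have h1 : F (j+3) x = x*F (j+2) x + F (j+1) x := F_rec (j+1) x
  have h2 : F (j+4) x = x*F (j+3) x + F (j+2) x := F_rec (j+2) x
  linear_combination h2 + x*h1 - h0

lemma Sc_rec (x : ℝ) (m : ℕ) :
    Sc x (m+2) = F (2*m+5) x - x * F (2*m+3) x + 2*x * Sc x (m+1) - Sc x m := by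
  have hs2 : Sc x (m+2) = (∑ k ∈ Finset.range (m+1), T (m+2-k) x * F (2*k+1) x)
      + x * F (2*m+3) x + F (2*m+5) x := by
    unfold Sc
    rw [Finset.sum_range_succ, Finset.sum_range_succ]
    rw [show m+2-(m+1) = 1 from by omega, show m+2-(m+2) = 0 from by omega,
      show 2*(m+1)+1 = 2*m+3 from by omega, show 2*(m+2)+1 = 2*m+5 from by omega,
      show T 1 x = x from rfl, show T 0 x = 1 from rfl]
    ring
  have hs1 : Sc x (m+1) = (∑ k ∈ Finset.range (m+1), T (m+1-k) x * F (2*k+1) x)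
      + F (2*m+3) x := by
    unfold Sc
    rw [Finset.sum_range_succ, show m+1-(m+1) = 0 from by omega,
      show 2*(m+1)+1 = 2*m+3 from by omega, show T 0 x = 1 from rfl]
    ring
  have hstep : ∑ k ∈ Finset.range (m+1), T (m+2-k) x * F (2*k+1) x
      = 2*x*(∑ k ∈ Finset.range (m+1), T (m+1-k) x * F (2*k+1) x) - Sc x m := by
    unfold Sc
    rw [Finset.mul_sum, ← Finset.sum_sub_distrib]
    apply Finset.sum_congr rfl
    intro k hk
    have hk' : k ≤ m := Nat.lt_succ_iff.mp (Finset.mem_range.mp hk)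
    rw [show m+2-k = (m-k)+2 from by omega, show m+1-k = (m-k)+1 from by omega, T_rec]
    ring
  rw [hs2, hstep, hs1]
  ring

lemma key (x : ℝ) : ∀ m : ℕ, F (2*m+3) x - x * F (2*m+1) x
    = T (m+1) x - T m x + (x^2-2*x+2) * Sc x m := by
  intro m
  induction m using Nat.twoStepInduction with
  | zero =>
    norm_num [Sc, Finset.sum_range_one]
    norm_num [T, F]
    ring
  | one =>
    norm_num [Sc, Finset.sum_range_succ, Finset.sum_range_one]
    norm_num [T, F]
    ring
  | more m ih1 ih2 =>
    have hF1 : F (2*m+7) x = (x^2+2)*F (2*m+5) x - F (2*m+3) x := F_even (2*m+3) x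
    have hF2 : F (2*m+5) x = (x^2+2)*F (2*m+3) x - F (2*m+1) x := F_even (2*m+1) x
    have hT1 : T (m+3) x = 2*x*T (m+2) x - T (m+1) x := T_rec (m+1) x
    have hT2 : T (m+2) x = 2*x*T (m+1) x - T m x := T_rec m x
    have hA := Sc_rec x m
    have e1 : 2*(m+2)+3 = 2*m+7 := by omega
    have e2 : 2*(m+2)+1 = 2*m+5 := by omega
    have e3 : 2*(m+1)+3 = 2*m+5 := by omega
    have e4 : 2*(m+1)+1 = 2*m+3 := by omega
    rw [e1, e2]
    rw [e3, e4] at ih2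
    linear_combination hF1 - x*hF2 - (x^2-2*x+2)*hA - ih1 + 2*x*ih2 - hT1 + hT2

theorem stmt9 (n : ℕ) (hn : 1 ≤ n) (x : ℝ) :
    F (2*n+1) x - x * F (2*n-1) x =
      T n x - T (n-1) x + (x^2 - 2*x + 2) * ∑ k ∈ Finset.range n, T (n-1-k) x * F (2*k+1) x := by
  obtain ⟨m, rfl⟩ : ∃ m, n = m+1 := ⟨n-1, by omega⟩
  have h := key x m
  rw [show 2*(m+1)+1 = 2*m+3 from by omega, show 2*(m+1)-1 = 2*m+1 from by omega,
    show m+1-1 = m from rfl]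
  have hsum : ∑ k ∈ Finset.range (m+1), T (m-k) x * F (2*k+1) x = Sc x m := rfl
  rw [hsum]
  exact h
end
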